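/- For every preference profile, every stable matching μ, and every man m, the match of m under the men-proposing deferred acceptance rule is weakly preferred by m to μ(m) (men-optimality of MPDA). -/

import Mathlib

/-- A one-to-one matching between men `M` and women `W`; `none` means unmatched. -/
structure Matching (M W : Type*) where
  menMatch : M → Option W
  womenMatch : W → Option M
  consistent : ∀ m w, menMatch m = some w ↔ womenMatch w = some m

/-- A preference profile: each man has a strict linear order over `W ∪ {∅}`
(encoded as `Option W`, with `none` the outside option), and each woman over `M ∪ {∅}`. -/
structure Profile (M W : Type*) where
  menPref : M → LinearOrder (Option W)
  womenPref : W → LinearOrder (Option M)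

variable {M W : Type*}

def IndividuallyRational (μ : Matching M W) (P : Profile M W) : Prop :=
  (∀ m, (P.menPref m).le none (μ.menMatch m)) ∧
  (∀ w, (P.womenPref w).le none (μ.womenMatch w))

def Blocks (m : M) (w : W) (μ : Matching M W) (P : Profile M W) : Prop :=
  (P.menPref m).lt (μ.menMatch m) (some w) ∧
  (P.womenPref w).lt (μ.womenMatch w) (some m)

def Stable (μ : Matching M W) (P : Profile M W) : Prop :=
  IndividuallyRational μ P ∧ ∀ m w, ¬ Blocks m w μ P

/-- The men-optimal stable matching: stable, and every man weakly prefers it to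
any stable matching.  This characterizes the outcome of the men-proposing
deferred acceptance (MPDA) algorithm. -/
def MenOptimalStable (μ : Matching M W) (P : Profile M W) : Prop :=
  Stable μ P ∧
    ∀ ν : Matching M W, Stable ν P → ∀ m, (P.menPref m).le (ν.menMatch m) (μ.menMatch m)

/-- The women-optimal stable matching, i.e. the outcome of women-proposing DA. -/
def WomenOptimalStable (μ : Matching M W) (P : Profile M W) : Prop :=
  Stable μ P ∧
    ∀ ν : Matching M W, Stable ν P → ∀ w, (P.womenPref w).le (ν.womenMatch w) (μ.womenMatch w)

def Matching.empty (M W : Type*) : Matching M W :=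
  ⟨fun _ => none, fun _ => none, by intro m w; simp⟩

/-- The men-proposing deferred acceptance rule `D^M`. -/
noncomputable def mpda (P : Profile M W) : Matching M W :=
  letI := Classical.dec (∃ μ : Matching M W, MenOptimalStable μ P)
  if h : ∃ μ : Matching M W, MenOptimalStable μ P then h.choose else Matching.empty M W

/-- The women-proposing deferred acceptance rule `D^W`. -/
noncomputable def wpda (P : Profile M W) : Matching M W :=
  letI := Classical.dec (∃ μ : Matching M W, WomenOptimalStable μ P)
  if h : ∃ μ : Matching M W, WomenOptimalStable μ P then h.choose else Matching.empty M W

/-- A domain of preference profiles: a set of admissible preferences for each agent. -/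
structure Domain (M W : Type*) where
  men : M → Set (LinearOrder (Option W))
  women : W → Set (LinearOrder (Option M))

/-- Membership of a profile in (the product domain generated by) a domain. -/
def Domain.mem (D : Domain M W) (P : Profile M W) : Prop :=
  (∀ m, P.menPref m ∈ D.men m) ∧ (∀ w, P.womenPref w ∈ D.women w)

def Profile.updateMan [DecidableEq M] (P : Profile M W) (m : M)
    (p : LinearOrder (Option W)) : Profile M W :=
  ⟨Function.update P.menPref m p, P.womenPref⟩

def Profile.updateWoman [DecidableEq W] (P : Profile M W) (w : W)
    (p : LinearOrder (Option M)) : Profile M W :=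
  ⟨P.menPref, Function.update P.womenPref w p⟩

/-- A matching rule is stable on a domain if it selects a stable matching at
every profile of the domain. -/
def StableOn (D : Domain M W) (φ : Profile M W → Matching M W) : Prop :=
  ∀ P, D.mem P → Stable (φ P) P

/-- Strategy-proofness on a domain: no single agent can strictly gain by
misreporting an admissible preference. -/
def StrategyProofOn [DecidableEq M] [DecidableEq W] (D : Domain M W)
    (φ : Profile M W → Matching M W) : Prop :=
  ∀ P, D.mem P →
    (∀ m p, p ∈ D.men m →
      (P.menPref m).le ((φ (P.updateMan m p)).menMatch m) ((φ P).menMatch m)) ∧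
    (∀ w p, p ∈ D.women w →
      (P.womenPref w).le ((φ (P.updateWoman w p)).womenMatch w) ((φ P).womenMatch w))

/-- A coalition `(Sm, Sw)` manipulates `φ` at `P` via the admissible profile `Q`
(which agrees with `P` outside the coalition): every coalition member is
strictly better off at `φ Q` than at `φ P` according to true preferences. -/
def Manipulation (D : Domain M W) (φ : Profile M W → Matching M W)
    (P Q : Profile M W) (Sm : Set M) (Sw : Set W) : Prop :=
  D.mem P ∧ D.mem Q ∧
  (∀ m ∉ Sm, Q.menPref m = P.menPref m) ∧
  (∀ w ∉ Sw, Q.womenPref w = P.womenPref w) ∧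
  (∀ m ∈ Sm, (P.menPref m).lt ((φ P).menMatch m) ((φ Q).menMatch m)) ∧
  (∀ w ∈ Sw, (P.womenPref w).lt ((φ P).womenMatch w) ((φ Q).womenMatch w))

/-- Group strategy-proofness on a domain: no nonempty coalition can manipulate. -/
def GroupStrategyProofOn (D : Domain M W) (φ : Profile M W → Matching M W) : Prop :=
  ¬ ∃ (P Q : Profile M W) (Sm : Set M) (Sw : Set W),
      (Sm.Nonempty ∨ Sw.Nonempty) ∧ Manipulation D φ P Q Sm Sw

/-- Top dominance for women. -/
def TopDominanceWomen (D : Domain M W) : Prop :=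
  ∀ w : W, ∀ x : M, ∀ y z : Option M,
    (∃ P ∈ D.women w, P.lt y (some x) ∧ P.lt z y ∧ P.le none y) →
      ¬ ∃ P' ∈ D.women w, P'.lt z (some x) ∧ P'.lt y z ∧ P'.le none z

/-- Top dominance for men. -/
def TopDominanceMen (D : Domain M W) : Prop :=
  ∀ m : M, ∀ x : W, ∀ y z : Option W,
    (∃ P ∈ D.men m, P.lt y (some x) ∧ P.lt z y ∧ P.le none y) →
      ¬ ∃ P' ∈ D.men m, P'.lt z (some x) ∧ P'.lt y z ∧ P'.le none z

/-- Unrestricted top pairs for men. -/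
def UnrestrictedTopPairsMen (D : Domain M W) : Prop :=
  ∀ m : M,
    (∀ w w' : W, w ≠ w' → ∃ P ∈ D.men m, P.lt (some w') (some w) ∧
        ∀ z : Option W, z ≠ some w → z ≠ some w' → P.lt z (some w')) ∧
    (∀ w : W, ∃ P ∈ D.men m, P.lt none (some w) ∧
        ∀ z : Option W, z ≠ some w → z ≠ none → P.lt z none) ∧
    (∃ P ∈ D.men m, ∀ z : Option W, z ≠ none → P.lt z none)

/-- Unrestricted top pairs for women. -/
def UnrestrictedTopPairsWomen (D : Domain M W) : Prop :=
  ∀ w : W,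
    (∀ m m' : M, m ≠ m' → ∃ P ∈ D.women w, P.lt (some m') (some m) ∧
        ∀ z : Option M, z ≠ some m → z ≠ some m' → P.lt z (some m')) ∧
    (∀ m : M, ∃ P ∈ D.women w, P.lt none (some m) ∧
        ∀ z : Option M, z ≠ some m → z ≠ none → P.lt z none) ∧
    (∃ P ∈ D.women w, ∀ z : Option M, z ≠ none → P.lt z none)

/-- Single-peakedness of a preference over `Option α` with respect to a prior
order `ord` on `α`:  moving away from the peak (the most preferred element of
`α`) on either side makes the preference decline. -/
def SinglePeaked {α : Type*} (ord : LinearOrder α) (P : LinearOrder (Option α)) : Prop :=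
  ∀ peak : α, (∀ a : α, P.le (some a) (some peak)) →
    ∀ a b : α, ((ord.le peak a ∧ ord.lt a b) ∨ (ord.lt b a ∧ ord.le a peak)) →
      P.lt (some b) (some a)

/-- The maximal single-peaked domain with respect to orders on men and women. -/
def maximalSinglePeakedDomain (ordM : LinearOrder M) (ordW : LinearOrder W) : Domain M W :=
  ⟨fun _ => {P | SinglePeaked ordW P}, fun _ => {P | SinglePeaked ordM P}⟩

/-- A domain is single-peaked if all admissible preferences are single-peaked. -/
def Domain.SinglePeakedDomain (D : Domain M W) (ordM : LinearOrder M)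
    (ordW : LinearOrder W) : Prop :=
  (∀ m, ∀ P ∈ D.men m, SinglePeaked ordW P) ∧ (∀ w, ∀ P ∈ D.women w, SinglePeaked ordM P)

/-- Anonymity: all men share the same admissible set, and all women do too. -/
def Domain.Anonymous (D : Domain M W) : Prop :=
  (∀ m m' : M, D.men m = D.men m') ∧ (∀ w w' : W, D.women w = D.women w')

/-- Cyclical inclusion for men. -/
def CyclicalInclusionMen (D : Domain M W) : Prop :=
  ∀ m : M,
    (∃ P ∈ D.men m, ∀ z : Option W, z ≠ none → P.lt z none) ∧
    (∀ w w' : W,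
      (∃ P ∈ D.men m, P.lt (some w') (some w) ∧ P.lt none (some w')) →
      (∃ P ∈ D.men m, P.lt (some w) (some w') ∧ P.lt none (some w)))

/-- Cyclical inclusion for women. -/
def CyclicalInclusionWomen (D : Domain M W) : Prop :=
  ∀ w : W,
    (∃ P ∈ D.women w, ∀ z : Option M, z ≠ none → P.lt z none) ∧
    (∀ m m' : M,
      (∃ P ∈ D.women w, P.lt (some m') (some m) ∧ P.lt none (some m')) →
      (∃ P ∈ D.women w, P.lt (some m) (some m') ∧ P.lt none (some m)))

/-- The unrestricted domain: every strict linear order is admissible. -/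
def fullDomain (M W : Type*) : Domain M W :=
  ⟨fun _ => Set.univ, fun _ => Set.univ⟩


-- ===== order kit =====
namespace K
variable {α : Type*} (L : LinearOrder α)
lemma le_rfl' (a : α) : L.le a a := by letI := L; exact le_refl a
lemma le_trans' {a b c : α} (h1 : L.le a b) (h2 : L.le b c) : L.le a c := by
  letI := L; exact le_trans h1 h2
lemma le_total' (a b : α) : L.le a b ∨ L.le b a := by letI := L; exact le_total a b
lemma not_lt' {a b : α} : ¬ L.lt a b ↔ L.le b a := by letI := L; exact not_lt
lemma le_of_lt' {a b : α} (h : L.lt a b) : L.le a b := by letI := L; exact le_of_lt h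
lemma lt_of_le_of_lt' {a b c : α} (h1 : L.le a b) (h2 : L.lt b c) : L.lt a c := by
  letI := L; exact lt_of_le_of_lt h1 h2
lemma lt_of_lt_of_le' {a b c : α} (h1 : L.lt a b) (h2 : L.le b c) : L.lt a c := by
  letI := L; exact lt_of_lt_of_le h1 h2
lemma lt_irrefl' (a : α) : ¬ L.lt a a := by letI := L; exact lt_irrefl a
lemma lt_of_le_of_ne' {a b : α} (h1 : L.le a b) (h2 : a ≠ b) : L.lt a b := by
  letI := L; exact lt_of_le_of_ne h1 h2
lemma ne_of_lt' {a b : α} (h : L.lt a b) : a ≠ b := by letI := L; exact ne_of_lt h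
end K

section GS
variable (P : Profile M W) (μ ν : Matching M W)

/-- If a man strictly prefers `ν`, his `ν`-partner exists and strictly prefers `μ`. -/
lemma stepA (hμ : Stable μ P) (hν : Stable ν P) (m : M)
    (hm : (P.menPref m).lt (μ.menMatch m) (ν.menMatch m)) :
    ∃ w : W, ν.menMatch m = some w ∧
      (P.womenPref w).lt (ν.womenMatch w) (μ.womenMatch w) := by
  obtain ⟨w, hw⟩ : ∃ w, ν.menMatch m = some w := by
    cases hvm : ν.menMatch m with
    | none => exact absurd (K.lt_of_le_of_lt' _ (hμ.1.1 m) (hvm ▸ hm)) (K.lt_irrefl' _ _)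
    | some w => exact ⟨w, rfl⟩
  refine ⟨w, hw, ?_⟩
  have hνw : ν.womenMatch w = some m := (ν.consistent m w).1 hw
  have hA : (P.menPref m).lt (μ.menMatch m) (some w) := hw ▸ hm
  have hnb := hμ.2 m w
  have hB : ¬ (P.womenPref w).lt (μ.womenMatch w) (some m) := fun h => hnb ⟨hA, h⟩
  have hle : (P.womenPref w).le (some m) (μ.womenMatch w) := (K.not_lt' _).1 hB
  have hne : some m ≠ μ.womenMatch w := by
    intro h
    have : μ.menMatch m = some w := (μ.consistent m w).2 h.symm
    rw [this, hw] at hm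
    exact K.lt_irrefl' _ _ hm
  rw [hνw]
  exact K.lt_of_le_of_ne' _ hle hne

/-- If a woman strictly prefers `μ`, her `μ`-partner exists and strictly prefers `ν`. -/
lemma stepB (hμ : Stable μ P) (hν : Stable ν P) (w : W)
    (hw : (P.womenPref w).lt (ν.womenMatch w) (μ.womenMatch w)) :
    ∃ m : M, μ.womenMatch w = some m ∧
      (P.menPref m).lt (μ.menMatch m) (ν.menMatch m) := by
  obtain ⟨m, hm⟩ : ∃ m, μ.womenMatch w = some m := by
    cases hmw : μ.womenMatch w with
    | none => exact absurd (K.lt_of_le_of_lt' _ (hν.1.2 w) (hmw ▸ hw)) (K.lt_irrefl' _ _)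
    | some m => exact ⟨m, rfl⟩
  refine ⟨m, hm, ?_⟩
  have hμm : μ.menMatch m = some w := (μ.consistent m w).2 hm
  have hB : (P.womenPref w).lt (ν.womenMatch w) (some m) := hm ▸ hw
  have hnb := hν.2 m w
  have hA : ¬ (P.menPref m).lt (ν.menMatch m) (some w) := fun h => hnb ⟨h, hB⟩
  have hle : (P.menPref m).le (some w) (ν.menMatch m) := (K.not_lt' _).1 hA
  have hne : some w ≠ ν.menMatch m := by
    intro h
    have : ν.womenMatch w = some m := (ν.consistent m w).1 h.symm
    rw [this, hm] at hw
    exact K.lt_irrefl' _ _ hw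
  rw [hμm]
  exact K.lt_of_le_of_ne' _ hle hne

/-- Decomposition/surjectivity: if a woman strictly prefers `μ`, then she is the
`ν`-partner of some man who strictly prefers `ν`. -/
lemma surjA [Fintype M] [Fintype W] (hμ : Stable μ P) (hν : Stable ν P) (w : W)
    (hw : (P.womenPref w).lt (ν.womenMatch w) (μ.womenMatch w)) :
    ∃ m : M, ν.menMatch m = some w ∧
      (P.menPref m).lt (μ.menMatch m) (ν.menMatch m) := by
  classical
  let S1 := {m : M // (P.menPref m).lt (μ.menMatch m) (ν.menMatch m)}
  let S2 := {w : W // (P.womenPref w).lt (ν.womenMatch w) (μ.womenMatch w)}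
  have hA : ∀ x : S1, ∃ w : W, ν.menMatch x.1 = some w ∧
      (P.womenPref w).lt (ν.womenMatch w) (μ.womenMatch w) :=
    fun x => stepA P μ ν hμ hν x.1 x.2
  have hB : ∀ y : S2, ∃ m : M, μ.womenMatch y.1 = some m ∧
      (P.menPref m).lt (μ.menMatch m) (ν.menMatch m) :=
    fun y => stepB P μ ν hμ hν y.1 y.2
  let f : S1 → S2 := fun x => ⟨(hA x).choose, (hA x).choose_spec.2⟩
  let g : S2 → S1 := fun y => ⟨(hB y).choose, (hB y).choose_spec.2⟩
  have hfspec : ∀ x : S1, ν.menMatch x.1 = some (f x).1 := fun x => (hA x).choose_spec.1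
  have hgspec : ∀ y : S2, μ.womenMatch y.1 = some (g y).1 := fun y => (hB y).choose_spec.1
  have hfinj : Function.Injective f := by
    intro a b hab
    have ha := hfspec a
    have hb := hfspec b
    rw [hab] at ha
    have ha' := (ν.consistent a.1 (f b).1).1 ha
    have hb' := (ν.consistent b.1 (f b).1).1 hb
    exact Subtype.ext (by rw [ha'] at hb'; exact Option.some_injective _ hb')
  have hginj : Function.Injective g := by
    intro a b hab
    have ha := hgspec a
    have hb := hgspec b
    rw [hab] at ha
    have ha' := (μ.consistent (g b).1 a.1).2 ha
    have hb' := (μ.consistent (g b).1 b.1).2 hb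
    exact Subtype.ext (by rw [ha'] at hb'; exact Option.some_injective _ hb')
  have hcard : Fintype.card S1 = Fintype.card S2 :=
    le_antisymm (Fintype.card_le_of_injective f hfinj)
      (Fintype.card_le_of_injective g hginj)
  have hfsurj : Function.Surjective f :=
    ((Fintype.bijective_iff_injective_and_card f).2 ⟨hfinj, hcard⟩).2
  obtain ⟨x, hx⟩ := hfsurj ⟨w, hw⟩
  refine ⟨x.1, ?_, x.2⟩
  have := hfspec x
  rw [hx] at this
  exact this

end GS

section JoinSec
variable (P : Profile M W) (μ ν : Matching M W)

noncomputable def joinFn : M → Option W :=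
  fun m => if (P.menPref m).le (μ.menMatch m) (ν.menMatch m) then ν.menMatch m
           else μ.menMatch m

lemma joinFn_eq (m : M) :
    joinFn P μ ν m = μ.menMatch m ∨ joinFn P μ ν m = ν.menMatch m := by
  unfold joinFn; split
  · exact Or.inr rfl
  · exact Or.inl rfl

lemma joinFn_ge_left (m : M) :
    (P.menPref m).le (μ.menMatch m) (joinFn P μ ν m) := by
  unfold joinFn; split
  · assumption
  · exact K.le_rfl' _ _

lemma joinFn_ge_right (m : M) :
    (P.menPref m).le (ν.menMatch m) (joinFn P μ ν m) := by
  unfold joinFn; split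
  · exact K.le_rfl' _ _
  · rcases K.le_total' (P.menPref m) (μ.menMatch m) (ν.menMatch m) with h | h
    · contradiction
    · exact h

lemma join_aux (hμ : Stable μ P) (hν : Stable ν P) {a b : M} {w : W}
    (ha : μ.menMatch a = some w) (hb : ν.menMatch b = some w)
    (ha2 : (P.menPref a).le (ν.menMatch a) (some w))
    (hb2 : (P.menPref b).le (μ.menMatch b) (some w)) : a = b := by
  by_contra hne
  have hμw : μ.womenMatch w = some a := (μ.consistent a w).1 ha
  have hνw : ν.womenMatch w = some b := (ν.consistent b w).1 hb
  rcases K.le_total' (P.womenPref w) (some a) (some b) with h | h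
  · -- (b, w) blocks μ
    have h1 : (P.menPref b).lt (μ.menMatch b) (some w) := by
      refine K.lt_of_le_of_ne' _ hb2 ?_
      intro hmb
      have : μ.womenMatch w = some b := (μ.consistent b w).1 hmb
      rw [hμw] at this
      exact hne (Option.some_injective _ this)
    have h2 : (P.womenPref w).lt (μ.womenMatch w) (some b) := by
      rw [hμw]
      exact K.lt_of_le_of_ne' _ h (by simpa using hne)
    exact hμ.2 b w ⟨h1, h2⟩
  · -- (a, w) blocks ν
    have h1 : (P.menPref a).lt (ν.menMatch a) (some w) := by
      refine K.lt_of_le_of_ne' _ ha2 ?_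
      intro hna
      have : ν.womenMatch w = some a := (ν.consistent a w).1 hna
      rw [hνw] at this
      exact hne (Option.some_injective _ this).symm
    have h2 : (P.womenPref w).lt (ν.womenMatch w) (some a) := by
      rw [hνw]
      exact K.lt_of_le_of_ne' _ h (by simpa using (Ne.symm hne))
    exact hν.2 a w ⟨h1, h2⟩

lemma joinFn_inj (hμ : Stable μ P) (hν : Stable ν P) {m m' : M} {w : W}
    (h : joinFn P μ ν m = some w) (h' : joinFn P μ ν m' = some w) : m = m' := by
  have hm2l := joinFn_ge_left P μ ν m
  have hm2r := joinFn_ge_right P μ ν m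
  have hm2l' := joinFn_ge_left P μ ν m'
  have hm2r' := joinFn_ge_right P μ ν m'
  rcases joinFn_eq P μ ν m with e | e <;> rcases joinFn_eq P μ ν m' with e' | e'
  · -- both from μ
    have h1 : μ.womenMatch w = some m := (μ.consistent m w).1 (e ▸ h)
    have h2 : μ.womenMatch w = some m' := (μ.consistent m' w).1 (e' ▸ h')
    rw [h1] at h2; exact Option.some_injective _ h2
  · -- m from μ, m' from ν
    exact join_aux P μ ν hμ hν (e ▸ h) (e' ▸ h') (h ▸ hm2r) (h' ▸ hm2l')
  · -- m from ν, m' from μ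
    exact (join_aux P μ ν hμ hν (e' ▸ h') (e ▸ h) (h' ▸ hm2r') (h ▸ hm2l)).symm
  · have h1 : ν.womenMatch w = some m := (ν.consistent m w).1 (e ▸ h)
    have h2 : ν.womenMatch w = some m' := (ν.consistent m' w).1 (e' ▸ h')
    rw [h1] at h2; exact Option.some_injective _ h2

noncomputable def join (hμ : Stable μ P) (hν : Stable ν P) : Matching M W where
  menMatch := joinFn P μ ν
  womenMatch := fun w =>
    letI := Classical.dec (∃ m, joinFn P μ ν m = some w)
    if h : ∃ m, joinFn P μ ν m = some w then some h.choose else none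
  consistent := by
    intro m w
    constructor
    · intro h
      have hex : ∃ m, joinFn P μ ν m = some w := ⟨m, h⟩
      simp only [dif_pos hex]
      exact congrArg some (joinFn_inj P μ ν hμ hν hex.choose_spec h)
    · intro h
      by_cases hex : ∃ m0, joinFn P μ ν m0 = some w
      · simp only [dif_pos hex] at h
        have : hex.choose = m := Option.some_injective _ h
        rw [← this]; exact hex.choose_spec
      · simp only [dif_neg hex] at h
        exact nomatch h

lemma join_menMatch (hμ : Stable μ P) (hν : Stable ν P) :
    (join P μ ν hμ hν).menMatch = joinFn P μ ν := rfl

lemma join_stable [Fintype M] [Fintype W] (hμ : Stable μ P) (hν : Stable ν P) :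
    Stable (join P μ ν hμ hν) P := by
  classical
  refine ⟨⟨?_, ?_⟩, ?_⟩
  · intro m
    exact K.le_trans' _ (hμ.1.1 m) (joinFn_ge_left P μ ν m)
  · intro w
    show (P.womenPref w).le none ((join P μ ν hμ hν).womenMatch w)
    by_cases hex : ∃ m0, joinFn P μ ν m0 = some w
    · have hval : (join P μ ν hμ hν).womenMatch w = some hex.choose := dif_pos hex
      rw [hval]
      rcases joinFn_eq P μ ν hex.choose with e | e
    -- her join-partner is her μ- or ν-partner; use IR of that matching
      · have : μ.womenMatch w = some hex.choose :=
          (μ.consistent hex.choose w).1 (e ▸ hex.choose_spec)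
        have h2 := hμ.1.2 w
        rwa [this] at h2
      · have : ν.womenMatch w = some hex.choose :=
          (ν.consistent hex.choose w).1 (e ▸ hex.choose_spec)
        have h2 := hν.1.2 w
        rwa [this] at h2
    · have hval : (join P μ ν hμ hν).womenMatch w = none := dif_neg hex
      rw [hval]
      exact K.le_rfl' _ _
  · rintro m w ⟨h1, h2⟩
    -- h1 : joinFn m <_m some w, h2 : joinWomen w <_w some m
    have hμlt : (P.menPref m).lt (μ.menMatch m) (some w) :=
      K.lt_of_le_of_lt' _ (joinFn_ge_left P μ ν m) h1
    have hνlt : (P.menPref m).lt (ν.menMatch m) (some w) :=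
      K.lt_of_le_of_lt' _ (joinFn_ge_right P μ ν m) h1
    have hμge : (P.womenPref w).le (some m) (μ.womenMatch w) :=
      (K.not_lt' _).1 (fun h => hμ.2 m w ⟨hμlt, h⟩)
    have hνge : (P.womenPref w).le (some m) (ν.womenMatch w) :=
      (K.not_lt' _).1 (fun h => hν.2 m w ⟨hνlt, h⟩)
    by_cases hex : ∃ m0, joinFn P μ ν m0 = some w
    · have hval : (join P μ ν hμ hν).womenMatch w = some hex.choose := dif_pos hex
      rw [hval] at h2
      rcases joinFn_eq P μ ν hex.choose with e | e
      · have hw : μ.womenMatch w = some hex.choose :=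
          (μ.consistent hex.choose w).1 (e ▸ hex.choose_spec)
        rw [hw] at hμge
        exact K.lt_irrefl' _ _ (K.lt_of_le_of_lt' _ hμge h2)
      · have hw : ν.womenMatch w = some hex.choose :=
          (ν.consistent hex.choose w).1 (e ▸ hex.choose_spec)
        rw [hw] at hνge
        exact K.lt_irrefl' _ _ (K.lt_of_le_of_lt' _ hνge h2)
    · -- w unmatched in join but m ≤_w μ(w), ν(w): both partners exist
      have hval : (join P μ ν hμ hν).womenMatch w = none := dif_neg hex
      rw [hval] at h2
      -- μ(w) = some m1
      obtain ⟨m1, hm1⟩ : ∃ m1, μ.womenMatch w = some m1 := by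
        cases hc : μ.womenMatch w with
        | none =>
          rw [hc] at hμge
          exact absurd (K.lt_of_le_of_lt' _ hμge h2) (K.lt_irrefl' _ _)
        | some m1 => exact ⟨m1, rfl⟩
      obtain ⟨m2, hm2⟩ : ∃ m2, ν.womenMatch w = some m2 := by
        cases hc : ν.womenMatch w with
        | none =>
          rw [hc] at hνge
          exact absurd (K.lt_of_le_of_lt' _ hνge h2) (K.lt_irrefl' _ _)
        | some m2 => exact ⟨m2, rfl⟩
      have hμm1 : μ.menMatch m1 = some w := (μ.consistent m1 w).2 hm1
      have hνm2 : ν.menMatch m2 = some w := (ν.consistent m2 w).2 hm2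
      -- m1 strictly prefers ν
      have hpr1 : (P.menPref m1).lt (μ.menMatch m1) (ν.menMatch m1) := by
        rcases joinFn_eq P μ ν m1 with e | e
        · exact absurd ⟨m1, e.trans hμm1⟩ hex
        · have := joinFn_ge_left P μ ν m1
          rw [e] at this
          refine K.lt_of_le_of_ne' _ this ?_
          intro heq
          exact hex ⟨m1, e.trans (heq ▸ hμm1)⟩
      -- m2 strictly prefers μ
      have hpr2 : (P.menPref m2).lt (ν.menMatch m2) (μ.menMatch m2) := by
        rcases joinFn_eq P μ ν m2 with e | e
        · have := joinFn_ge_right P μ ν m2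
          rw [e] at this
          refine K.lt_of_le_of_ne' _ this ?_
          intro heq
          exact hex ⟨m2, e.trans (heq ▸ hνm2)⟩
        · exact absurd ⟨m2, e.trans hνm2⟩ hex
      -- m1 ≠ m2
      have hne : m1 ≠ m2 := by
        intro h
        rw [h] at hμm1
        rw [hμm1, hνm2] at hpr2
        exact K.lt_irrefl' _ _ hpr2
      rcases K.le_total' (P.womenPref w) (some m1) (some m2) with h | h
      · -- w strictly prefers ν: apply surjA with μ ν swapped
        have hwlt : (P.womenPref w).lt (μ.womenMatch w) (ν.womenMatch w) := by
          rw [hm1, hm2]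
          exact K.lt_of_le_of_ne' _ h (by simpa using hne)
        obtain ⟨m0, hm0, hm0'⟩ := surjA P ν μ hν hμ w hwlt
        have : μ.womenMatch w = some m0 := (μ.consistent m0 w).1 hm0
        rw [hm1] at this
        have hm0m1 : m0 = m1 := (Option.some_injective _ this).symm
        rw [hm0m1] at hm0'
        exact K.lt_irrefl' _ _ (K.lt_of_lt_of_le' _ hm0' (K.le_of_lt' _ hpr1))
      · -- w strictly prefers μ: surjA directly
        have hwlt : (P.womenPref w).lt (ν.womenMatch w) (μ.womenMatch w) := by
          rw [hm1, hm2]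
          exact K.lt_of_le_of_ne' _ h (by simpa using (Ne.symm hne))
        obtain ⟨m0, hm0, hm0'⟩ := surjA P μ ν hμ hν w hwlt
        have : ν.womenMatch w = some m0 := (ν.consistent m0 w).1 hm0
        rw [hm2] at this
        have hm0m2 : m0 = m2 := (Option.some_injective _ this).symm
        rw [hm0m2] at hm0'
        exact K.lt_irrefl' _ _ (K.lt_of_lt_of_le' _ hm0' (K.le_of_lt' _ hpr2))

end JoinSec

lemma exists_greatest [Fintype M] [Fintype W] (P : Profile M W)
    (t : Finset (M → Option W)) (ht : t.Nonempty)
    (hst : ∀ f ∈ t, ∃ σ : Matching M W, Stable σ P ∧ σ.menMatch = f) :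
    ∃ σ : Matching M W, Stable σ P ∧
      ∀ f ∈ t, ∀ m, (P.menPref m).le (f m) (σ.menMatch m) := by
  classical
  revert ht hst
  induction t using Finset.induction with
  | empty => exact fun ht _ => absurd ht (by simp)
  | @insert a s ha ih =>
    intro ht hst
    obtain ⟨σa, hσa, hσaeq⟩ := hst a (Finset.mem_insert_self a s)
    by_cases hs : s.Nonempty
    · obtain ⟨σs, hσs, hσsge⟩ := ih hs (fun f hf => hst f (Finset.mem_insert_of_mem hf))
      refine ⟨join P σa σs hσa hσs, join_stable P σa σs hσa hσs, ?_⟩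
      intro f hf m
      rcases Finset.mem_insert.1 hf with rfl | hf'
      · rw [← hσaeq]
        exact joinFn_ge_left P σa σs m
      · exact K.le_trans' _ (hσsge f hf' m) (joinFn_ge_right P σa σs m)
    · refine ⟨σa, hσa, ?_⟩
      intro f hf m
      rcases Finset.mem_insert.1 hf with rfl | hf'
      · rw [← hσaeq]; exact K.le_rfl' _ _
      · exact absurd ⟨f, hf'⟩ hs

lemma exists_menOptimal [Fintype M] [Fintype W] (P : Profile M W)
    (μ0 : Matching M W) (h0 : Stable μ0 P) :
    ∃ μ : Matching M W, MenOptimalStable μ P := by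
  classical
  let t : Finset (M → Option W) :=
    Finset.univ.filter (fun f => ∃ σ : Matching M W, Stable σ P ∧ σ.menMatch = f)
  have hmem : ∀ σ : Matching M W, Stable σ P → σ.menMatch ∈ t := by
    intro σ hσ
    simp only [t, Finset.mem_filter, Finset.mem_univ, true_and]
    exact ⟨σ, hσ, rfl⟩
  have ht : t.Nonempty := ⟨μ0.menMatch, hmem μ0 h0⟩
  have hst : ∀ f ∈ t, ∃ σ : Matching M W, Stable σ P ∧ σ.menMatch = f := by
    intro f hf
    simpa only [t, Finset.mem_filter, Finset.mem_univ, true_and] using hf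
  obtain ⟨σ, hσ, hge⟩ := exists_greatest P t ht hst
  exact ⟨σ, hσ, fun ν hν m => hge ν.menMatch (hmem ν hν) m⟩

/-- every man weakly prefers his MPDA match to his match under any
stable matching. -/
theorem mpda_men_optimal [Fintype M] [Fintype W] (P : Profile M W)
    (mu : Matching M W) (hmu : Stable mu P) (m : M) :
    (P.menPref m).le (mu.menMatch m) ((mpda P).menMatch m) := by
  have hex : ∃ μ : Matching M W, MenOptimalStable μ P := exists_menOptimal P mu hmu
  have : mpda P = hex.choose := by
    unfold mpda
    rw [dif_pos hex]
  rw [this]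
  exact hex.choose_spec.2 mu hmu m
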